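/- In U(gl(3|1))[[t]] the deformed odd generators satisfy the anticommutation relations: 2t·{E₄₃, E₁₄} = T − T' (equivalently {E₄₃, E₁₄} = (1/(2t))(T − T'); note T − T' = 2t e₁₃), {E₃₄, E₄₃} = H₃₄ − (1/16)(T − T')² − (t/4)(T − T')E₁₄E₄₃, and {E₁₄, E₄₁} = H₁₄ + (1/16)(T − T')² + (t/4)(T − T')E₄₃E₁₄. -/

import Mathlib

noncomputable section

namespace SuperJordanian

open scoped BigOperators

/-- The generalized binomial coefficient `C(1/2, n)`. -/
def cHalf (n : ℕ) : ℂ :=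
  (∏ i ∈ Finset.range n, ((1 : ℂ) / 2 - (i : ℂ))) / (n.factorial : ℂ)

/-- Parity for `gl(3|1)`: `p(i,j) = 1` iff exactly one of `i`, `j` equals the fourth index. -/
def par (i j : Fin 4) : ℕ :=
  if (i = 3 ∧ j ≠ 3) ∨ (i ≠ 3 ∧ j = 3) then 1 else 0

/-- The generator `e_{ij}` in the free algebra. -/
def gen (i j : Fin 4) : FreeAlgebra ℂ (Fin 4 × Fin 4) := FreeAlgebra.ι ℂ (i, j)

/-- Defining relations of the enveloping algebra `U(gl(3|1))`:
`e_{ij} e_{kl} - (-1)^{p(i,j)p(k,l)} e_{kl} e_{ij}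
  = δ_{jk} e_{il} - (-1)^{p(i,j)p(k,l)} δ_{li} e_{kj}`. -/
inductive Rel : FreeAlgebra ℂ (Fin 4 × Fin 4) → FreeAlgebra ℂ (Fin 4 × Fin 4) → Prop
  | mk (i j k l : Fin 4) :
      Rel (gen i j * gen k l - ((-1 : ℂ) ^ (par i j * par k l)) • (gen k l * gen i j))
        ((if j = k then gen i l else 0)
          - ((-1 : ℂ) ^ (par i j * par k l)) • (if l = i then gen k j else 0))

/-- The enveloping algebra `U = U(gl(3|1))`. -/
abbrev U : Type := RingQuot Rel

/-- The image of `e_{ij}` in `U`. -/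
def e (i j : Fin 4) : U := RingQuot.mkAlgHom ℂ Rel (gen i j)

/-- The formal power series ring `U[[t]]`. -/
abbrev V : Type := PowerSeries U

/-- The central formal variable `t`. -/
def tv : V := PowerSeries.X

/-- The inclusion `U → U[[t]]` as constant power series. -/
def C : U →+* V := PowerSeries.C (R := U)

def h₁₂ : U := e 0 0 - e 1 1
def h₂₃ : U := e 1 1 - e 2 2
def h₁₃ : U := e 0 0 - e 2 2
def h₃₄ : U := e 2 2 + e 3 3
def h₁₄ : U := e 0 0 + e 3 3

/-- `s = Σ_{n ≥ 0} C(1/2, n) t^{2n} e₁₃^{2n}`, so that `s² = 1 + t² e₁₃²`. -/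
def s : V := PowerSeries.mk fun m => if m % 2 = 0 then cHalf (m / 2) • ((e 0 2) ^ m) else 0

def T : V := tv * C (e 0 2) + s
def T' : V := -(tv * C (e 0 2)) + s
def H₁₃ : V := s * C h₁₃
def E₃₁ : V := C (e 2 0) - ((1 : ℂ) / 4) • (tv ^ 2 * C (e 0 2 * (h₁₃ ^ 2 - 1)))
def H₁₂ : V := C h₁₂ + ((1 : ℂ) / 2) • (tv ^ 2 * C ((e 0 2) ^ 2 * h₁₃))
def E₁₂ : V := C (e 0 1)
def E₂₁ : V := C (e 1 0) + ((1 : ℂ) / 4) • (tv ^ 2 * C (e 1 2 * e 0 2 * (2 * h₁₃ + 1)))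
def H₂₃ : V := C h₂₃ + ((1 : ℂ) / 2) • (tv ^ 2 * C ((e 0 2) ^ 2 * h₁₃))
def E₂₃ : V := C (e 1 2)
def E₃₂ : V := C (e 2 1) - ((1 : ℂ) / 4) • (tv ^ 2 * C (e 0 1 * e 0 2 * (2 * h₁₃ + 1)))
def H₃₄ : V := C h₃₄ - ((1 : ℂ) / 2) • (tv ^ 2 * C ((e 0 2) ^ 2 * h₁₃))
def E₃₄ : V := C (e 2 3) - ((1 : ℂ) / 4) • (tv ^ 2 * C (e 0 2 * e 0 3 * (2 * h₁₃ + 1)))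
def E₄₃ : V := C (e 3 2)
def E₁₄ : V := C (e 0 3)
def E₄₁ : V := C (e 3 0) + ((1 : ℂ) / 4) • (tv ^ 2 * C (e 0 2 * e 3 2 * (2 * h₁₃ + 1)))
def H₁₄ : V := C h₁₄ + ((1 : ℂ) / 2) • (tv ^ 2 * C ((e 0 2) ^ 2 * h₁₃))

/-- Commutator `[a, b] = ab - ba`. -/
def br (a b : V) : V := a * b - b * a

/-- Anticommutator `{a, b} = ab + ba`. -/
def ac (a b : V) : V := a * b + b * a

/-! ### Auxiliary lemmas -/

lemma erel (i j k l : Fin 4) :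
    e i j * e k l - algebraMap ℂ U ((-1:ℂ)^(par i j * par k l)) * (e k l * e i j)
      = (if j = k then e i l else 0)
        - algebraMap ℂ U ((-1:ℂ)^(par i j * par k l)) * (if l = i then e k j else 0) := by
  have h := RingQuot.mkAlgHom_rel ℂ (Rel.mk i j k l)
  simp only [Algebra.smul_def, map_sub, map_mul, AlgHom.commutes, apply_ite
    (RingQuot.mkAlgHom ℂ Rel), map_zero] at h
  simpa [e] using h

lemma negone_mul_U (x : U) : algebraMap ℂ U (-1) * x = -x := by
  have h : (algebraMap ℂ U (-1) + 1) * x = 0 := by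
    rw [← map_one (algebraMap ℂ U), ← map_add, neg_add_cancel, map_zero, zero_mul]
  rw [add_mul, one_mul] at h
  exact eq_neg_of_add_eq_zero_left h

lemma erelB (i j k l : Fin 4) (hp : par i j * par k l = 1) :
    e i j * e k l + e k l * e i j
      = (if j = k then e i l else 0) + (if l = i then e k j else 0) := by
  have h := erel i j k l
  rw [hp, pow_one, negone_mul_U, negone_mul_U, sub_neg_eq_add, sub_neg_eq_add] at h
  exact h

lemma R1 : e 0 3 * e 3 2 + e 3 2 * e 0 3 = e 0 2 := by
  have h := erelB 0 3 3 2 (by decide)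
  simpa using h

lemma R2 : e 2 3 * e 3 2 + e 3 2 * e 2 3 = h₃₄ := by
  have h := erelB 2 3 3 2 (by decide)
  rw [h₃₄]
  simpa using h

lemma R3 : e 0 3 * e 3 0 + e 3 0 * e 0 3 = h₁₄ := by
  have h := erelB 0 3 3 0 (by decide)
  rw [h₁₄]
  simpa using h

lemma R4 : e 0 2 * e 3 2 = e 3 2 * e 0 2 := by
  have h := erel 0 2 3 2
  simp [par] at h
  exact sub_eq_zero.mp h

lemma R5 : e 0 2 * e 0 3 = e 0 3 * e 0 2 := by
  have h := erel 0 2 0 3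
  simp [par] at h
  exact sub_eq_zero.mp h

lemma R6 : h₁₃ * e 3 2 = e 3 2 * h₁₃ + e 3 2 := by
  have h0 := erel 0 0 3 2
  have h2 := erel 2 2 3 2
  simp [par] at h0 h2
  rw [h₁₃, sub_mul, mul_sub, sub_eq_zero.mp h0, sub_eq_iff_eq_add.mp h2]
  abel

lemma R7 : h₁₃ * e 0 3 = e 0 3 * h₁₃ + e 0 3 := by
  have h0 := erel 0 0 0 3
  have h2 := erel 2 2 0 3
  simp [par] at h0 h2
  rw [h₁₃, sub_mul, mul_sub, sub_eq_iff_eq_add.mp h0, sub_eq_zero.mp h2]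
  abel

/-- the order-`t²` identity for statement 2 -/
lemma L3 : (e 0 2 * e 0 3 * (2 * h₁₃ + 1)) * e 3 2 + e 3 2 * (e 0 2 * e 0 3 * (2 * h₁₃ + 1))
    = 2 * ((e 0 2)^2 * h₁₃) + (e 0 2)^2 + 2 * (e 0 2 * e 0 3 * e 3 2) := by
  linear_combination (norm := noncomm_ring)
    2 * (e 0 2) * (e 0 3) * R6 - R4 * ((e 0 3) * (2 * h₁₃ + 1)) + (e 0 2) * R1 * (2 * h₁₃ + 1)

/-- the order-`t²` identity for statement 3 -/
lemma L5 : e 0 3 * (e 0 2 * e 3 2 * (2 * h₁₃ + 1)) + (e 0 2 * e 3 2 * (2 * h₁₃ + 1)) * e 0 3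
    = 2 * ((e 0 2)^2 * h₁₃) + (e 0 2)^2 + 2 * (e 0 2 * e 3 2 * e 0 3) := by
  linear_combination (norm := noncomm_ring)
    2 * (e 0 2) * (e 3 2) * R7 - R5 * ((e 3 2) * (2 * h₁₃ + 1)) + (e 0 2) * R1 * (2 * h₁₃ + 1)

lemma tv_comm (v : V) : v * tv = tv * v := (PowerSeries.commute_X v).eq

lemma tv_sq_comm (v : V) : v * tv ^ 2 = tv ^ 2 * v :=
  ((PowerSeries.commute_X v).pow_right 2).eq

lemma mul_tvC (u v : U) : (tv * C u) * (tv * C v) = tv ^ 2 * C (u * v) := by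
  rw [mul_assoc, ← mul_assoc (C u), tv_comm (C u), mul_assoc, ← map_mul, ← mul_assoc, ← pow_two]

lemma key2 (x y z w₀ w : U) (h1 : x * z + z * x = w₀) (h2 : y * z + z * y = w) :
    ac (C x - ((1:ℂ)/4) • (tv ^ 2 * C y)) (C z)
      = C w₀ - ((1:ℂ)/4) • (tv ^ 2 * C w) := by
  rw [ac, sub_mul, mul_sub, smul_mul_assoc, mul_smul_comm, mul_assoc,
    ← mul_assoc (C z), tv_sq_comm (C z), mul_assoc]
  simp only [← map_mul]
  rw [← h1, ← h2, map_add, map_add, mul_add, smul_add]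
  abel

lemma key3 (x y z w₀ w : U) (h1 : z * x + x * z = w₀) (h2 : z * y + y * z = w) :
    ac (C z) (C x + ((1:ℂ)/4) • (tv ^ 2 * C y))
      = C w₀ + ((1:ℂ)/4) • (tv ^ 2 * C w) := by
  rw [ac, add_mul, mul_add, smul_mul_assoc, mul_smul_comm, mul_assoc,
    ← mul_assoc (C z), tv_sq_comm (C z), mul_assoc]
  simp only [← map_mul]
  rw [← h1, ← h2, map_add, map_add, mul_add, smul_add]
  abel

lemma TT' : T - T' = 2 * (tv * C (e 0 2)) := by
  rw [T, T', two_mul]; abel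

lemma sq4 : (2 * (tv * C (e 0 2))) ^ 2
    = tv ^ 2 * C ((e 0 2)^2) + tv ^ 2 * C ((e 0 2)^2)
      + tv ^ 2 * C ((e 0 2)^2) + tv ^ 2 * C ((e 0 2)^2) := by
  rw [pow_two, two_mul, add_mul, mul_add]
  simp only [mul_tvC]
  rw [show e 0 2 * e 0 2 = (e 0 2)^2 from (pow_two _).symm]
  abel

lemma tvprod (b c : Fin 4 × Fin 4) :
    tv * (2 * (tv * C (e 0 2)) * C (e b.1 b.2) * C (e c.1 c.2))
      = tv ^ 2 * C (e 0 2 * e b.1 b.2 * e c.1 c.2)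
        + tv ^ 2 * C (e 0 2 * e b.1 b.2 * e c.1 c.2) := by
  have h : 2 * (tv * C (e 0 2)) * C (e b.1 b.2) * C (e c.1 c.2)
      = tv * C (e 0 2 * e b.1 b.2 * e c.1 c.2) + tv * C (e 0 2 * e b.1 b.2 * e c.1 c.2) := by
    simp only [two_mul, add_mul, mul_assoc, map_mul]
  rw [h, mul_add, ← mul_assoc, ← pow_two]

/-- anticommutation relations of the deformed odd generators of
`U(gl(3|1))[[t]]`. -/
theorem statement17 :
    2 * tv * ac E₄₃ E₁₄ = T - T' ∧
    ac E₃₄ E₄₃ = H₃₄ - ((1 : ℂ) / 16) • (T - T') ^ 2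
        - ((1 : ℂ) / 4) • (tv * ((T - T') * E₁₄ * E₄₃)) ∧
    ac E₁₄ E₄₁ = H₁₄ + ((1 : ℂ) / 16) • (T - T') ^ 2
        + ((1 : ℂ) / 4) • (tv * ((T - T') * E₄₃ * E₁₄)) := by
  have hTT : T - T' = 2 * (tv * C (e 0 2)) := TT'
  refine ⟨?_, ?_, ?_⟩
  · -- part 1
    have hac : ac E₄₃ E₁₄ = C (e 0 2) := by
      rw [ac, E₄₃, E₁₄, ← map_mul, ← map_mul, ← map_add]
      rw [show e 3 2 * e 0 3 + e 0 3 * e 3 2 = e 0 2 from (add_comm _ _).trans R1]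
    rw [hac, hTT, mul_assoc]
  · -- part 2
    have hL : ac E₃₄ E₄₃ = C h₃₄ - ((1:ℂ)/4) • (tv ^ 2 *
        C (2 * ((e 0 2)^2 * h₁₃) + (e 0 2)^2 + 2 * (e 0 2 * e 0 3 * e 3 2))) := by
      rw [E₃₄, E₄₃]
      exact key2 _ _ _ _ _ R2 L3
    rw [hL, H₃₄, hTT, E₁₄, E₄₃, sq4, tvprod (0,3) (3,2)]
    simp only [two_mul, map_add, mul_add, smul_add]
    rw [show ((1:ℂ)/2) • (tv ^ 2 * C (e 0 2 ^ 2 * h₁₃)) = ((1:ℂ)/4) • (tv ^ 2 * C (e 0 2 ^ 2 * h₁₃)) + ((1:ℂ)/4) • (tv ^ 2 * C (e 0 2 ^ 2 * h₁₃)) by rw [← add_smul]; norm_num,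
      show ((1:ℂ)/4) • (tv ^ 2 * C (e 0 2 ^ 2)) = ((1:ℂ)/16) • (tv ^ 2 * C (e 0 2 ^ 2)) + ((1:ℂ)/16) • (tv ^ 2 * C (e 0 2 ^ 2)) + ((1:ℂ)/16) • (tv ^ 2 * C (e 0 2 ^ 2)) + ((1:ℂ)/16) • (tv ^ 2 * C (e 0 2 ^ 2)) by simp only [← add_smul]; norm_num]
    abel
  · -- part 3
    have hL : ac E₁₄ E₄₁ = C h₁₄ + ((1:ℂ)/4) • (tv ^ 2 *
        C (2 * ((e 0 2)^2 * h₁₃) + (e 0 2)^2 + 2 * (e 0 2 * e 3 2 * e 0 3))) := by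
      rw [E₁₄, E₄₁]
      exact key3 _ _ _ _ _ R3 L5
    rw [hL, H₁₄, hTT, E₄₃, E₁₄, sq4, tvprod (3,2) (0,3)]
    simp only [two_mul, map_add, mul_add, smul_add]
    module

end SuperJordanian
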